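/- If X is a real random variable with E X² = 1 and E e^{α|X|} ≤ 2 for some α > 0, then α < 1. In fact, E X² = 1 implies E e^{|X|} > 2.36, so that E e^{|X|} > 2. -/
import Mathlib

open MeasureTheory ProbabilityTheory

lemma exp_lb {x : ℝ} (hx : 0 ≤ x) : 1 + (3/2) * x ^ 2 ≤ Real.exp x := by
  have h := Real.sum_le_exp_of_nonneg hx 6
  norm_num [Finset.sum_range_succ, Nat.factorial] at h
  nlinarith [mul_nonneg hx (sq_nonneg (x^2 + 5/2*x - 65/8)),
    mul_nonneg hx (sq_nonneg (x - 127/96)), hx]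

/-- If `E X² = 1` and `E e^{α|X|} ≤ 2` for some `α > 0`, then `α < 1`; in fact
`E X² = 1` forces `E e^{|X|} > 2.36 > 2`. -/
theorem stmt_10 {Ω : Type*} [MeasurableSpace Ω] {P : Measure Ω} [IsProbabilityMeasure P]
    (X : Ω → ℝ) (hmeas : Measurable X) (α : ℝ) (hα : 0 < α)
    (hvar : ∫ ω, (X ω) ^ 2 ∂P = 1)
    (hexp : ∫⁻ ω, ENNReal.ofReal (Real.exp (α * |X ω|)) ∂P ≤ 2) :
    α < 1 ∧ ENNReal.ofReal 2.36 < ∫⁻ ω, ENNReal.ofReal (Real.exp |X ω|) ∂P := by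
  -- Integrability of X²
  have hint : Integrable (fun ω => (X ω) ^ 2) P := by
    by_contra h
    rw [integral_undef h] at hvar
    norm_num at hvar
  -- the L² lintegral equals 1
  have hl2 : ∫⁻ ω, ENNReal.ofReal ((X ω) ^ 2) ∂P = 1 := by
    rw [← ofReal_integral_eq_lintegral_ofReal hint
      (Filter.Eventually.of_forall fun ω => sq_nonneg _), hvar, ENNReal.ofReal_one]
  -- main bound: ∫⁻ exp|X| ≥ 5/2
  have key : ENNReal.ofReal (5/2 : ℝ) ≤ ∫⁻ ω, ENNReal.ofReal (Real.exp |X ω|) ∂P := by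
    have step1 : ∫⁻ ω, ENNReal.ofReal (1 + (3/2) * (X ω) ^ 2) ∂P
        ≤ ∫⁻ ω, ENNReal.ofReal (Real.exp |X ω|) ∂P := by
      refine lintegral_mono fun ω => ENNReal.ofReal_le_ofReal ?_
      have := exp_lb (abs_nonneg (X ω))
      rwa [sq_abs] at this
    refine le_trans ?_ step1
    have : ∀ ω, ENNReal.ofReal (1 + (3/2) * (X ω) ^ 2)
        = 1 + ENNReal.ofReal (3/2 : ℝ) * ENNReal.ofReal ((X ω) ^ 2) := by
      intro ω
      rw [ENNReal.ofReal_add (by norm_num) (by positivity), ENNReal.ofReal_one,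
        ENNReal.ofReal_mul (by norm_num)]
    simp_rw [this]
    rw [lintegral_add_left measurable_const, lintegral_const_mul _ (by fun_prop), hl2,
      lintegral_one]
    simp only [measure_univ, mul_one, one_mul]
    rw [show (5/2 : ℝ) = 1 + 3/2 by norm_num,
      ENNReal.ofReal_add (by norm_num) (by norm_num), ENNReal.ofReal_one]
  have h2 : ENNReal.ofReal 2.36 < ∫⁻ ω, ENNReal.ofReal (Real.exp |X ω|) ∂P := by
    refine lt_of_lt_of_le ?_ key
    exact ENNReal.ofReal_lt_ofReal_iff (by norm_num) |>.mpr (by norm_num)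
  refine ⟨?_, h2⟩
  by_contra h
  push_neg at h
  have hmono : ∫⁻ ω, ENNReal.ofReal (Real.exp |X ω|) ∂P
      ≤ ∫⁻ ω, ENNReal.ofReal (Real.exp (α * |X ω|)) ∂P := by
    refine lintegral_mono fun ω => ENNReal.ofReal_le_ofReal (Real.exp_le_exp.mpr ?_)
    nlinarith [abs_nonneg (X ω)]
  have : ENNReal.ofReal 2.36 < 2 := lt_of_lt_of_le h2 (hmono.trans hexp)
  rw [show (2 : ENNReal) = ENNReal.ofReal 2 by simp] at this
  rw [ENNReal.ofReal_lt_ofReal_iff (by norm_num)] at this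
  norm_num at this
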